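/- Newman's periodicity theorem: If a finite set A ⊂ ℤ tiles the integers, i.e., there exists C ⊂ ℤ such that every integer has a unique representation n = a + c with a ∈ A, c ∈ C, then the tiling is periodic: there exists M > 0 and a finite set B ⊂ ℤ with C = B + Mℤ and |A|·|B| = M. -/

import Mathlib

def NTiles (A : Finset ℤ) (C : Set ℤ) : Prop :=
  ∀ n : ℤ, ∃! p : ℤ × ℤ, p.1 ∈ A ∧ p.2 ∈ C ∧ p.1 + p.2 = n

lemma newman_unique_pair {A : Finset ℤ} {C : Set ℤ} (ht : NTiles A C)
    {a c a' c' n : ℤ} (ha : a ∈ A) (hc : c ∈ C) (h : a + c = n)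
    (ha' : a' ∈ A) (hc' : c' ∈ C) (h' : a' + c' = n) : a = a' ∧ c = c' := by
  obtain ⟨p, _, hu⟩ := ht n
  have h1 := hu (a, c) ⟨ha, hc, h⟩
  have h2 := hu (a', c') ⟨ha', hc', h'⟩
  have := h1.trans h2.symm
  simpa [Prod.ext_iff] using this

lemma newman_fwd {A : Finset ℤ} {C : Set ℤ} (hA : A.Nonempty) (ht : NTiles A C) (n : ℤ) :
    n ∈ C ↔ ¬ ∃ a ∈ A, a ≠ A.min' hA ∧ n + A.min' hA - a ∈ C := by
  set m := A.min' hA with hm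
  constructor
  · rintro hn ⟨a, haA, hne, hc⟩
    have := newman_unique_pair ht (A.min'_mem hA) hn (by ring)
      haA hc (by ring : a + (n + m - a) = n + m)
    exact hne this.1.symm
  · intro h
    obtain ⟨⟨a, c⟩, ⟨haA, hc, hsum⟩, _⟩ := ht (n + m)
    by_cases hma : a = m
    · have hcn : c = n := by simp only at hsum; omega
      rwa [hcn] at hc
    · exact absurd ⟨a, haA, hma, by simp only at hsum; rwa [show n + m - a = c by omega]⟩ h

lemma newman_bwd {A : Finset ℤ} {C : Set ℤ} (hA : A.Nonempty) (ht : NTiles A C) (n : ℤ) :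
    n ∈ C ↔ ¬ ∃ a ∈ A, a ≠ A.max' hA ∧ n + A.max' hA - a ∈ C := by
  set m := A.max' hA with hm
  constructor
  · rintro hn ⟨a, haA, hne, hc⟩
    have := newman_unique_pair ht (A.max'_mem hA) hn (by ring)
      haA hc (by ring : a + (n + m - a) = n + m)
    exact hne this.1.symm
  · intro h
    obtain ⟨⟨a, c⟩, ⟨haA, hc, hsum⟩, _⟩ := ht (n + m)
    by_cases hma : a = m
    · have hcn : c = n := by simp only at hsum; omega
      rwa [hcn] at hc
    · exact absurd ⟨a, haA, hma, by simp only at hsum; rwa [show n + m - a = c by omega]⟩ h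

lemma newman_determ {A : Finset ℤ} (hA : A.Nonempty) {C C' : Set ℤ}
    (ht : NTiles A C) (ht' : NTiles A C') (x : ℤ)
    (hag : ∀ n, x ≤ n → n < x + (A.max' hA - A.min' hA) → (n ∈ C ↔ n ∈ C')) :
    ∀ n, (n ∈ C ↔ n ∈ C') := by
  set m := A.min' hA with hm
  set Mx := A.max' hA with hMx
  have hmM : m ≤ Mx := A.min'_le _ (A.max'_mem hA)
  set D := Mx - m with hD
  have key1 : ∀ k : ℕ, ∀ n, x ≤ n → n < x + D + k → (n ∈ C ↔ n ∈ C') := by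
    intro k
    induction k with
    | zero => intro n h1 h2; exact hag n h1 (by omega)
    | succ k ih =>
      intro n h1 h2
      by_cases hlt : n < x + D + k
      · exact ih n h1 hlt
      · have hn : n = x + D + k := by omega
        rw [newman_fwd hA ht n, newman_fwd hA ht' n]
        have hpt : ∀ a ∈ A, a ≠ m → ((n + m - a ∈ C) ↔ (n + m - a ∈ C')) := by
          intro a haA hne
          have h1a : m ≤ a := A.min'_le _ haA
          have h2a : a ≤ Mx := A.le_max' _ haA
          have hma : m < a := lt_of_le_of_ne h1a (Ne.symm hne)
          exact ih _ (by omega) (by omega)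
        constructor <;> intro hex h <;> apply hex
        · obtain ⟨a, haA, hne, hc⟩ := h
          exact ⟨a, haA, hne, (hpt a haA hne).mpr hc⟩
        · obtain ⟨a, haA, hne, hc⟩ := h
          exact ⟨a, haA, hne, (hpt a haA hne).mp hc⟩
  have key2 : ∀ k : ℕ, ∀ n, x - k ≤ n → n < x + D → (n ∈ C ↔ n ∈ C') := by
    intro k
    induction k with
    | zero => intro n h1 h2; exact hag n (by omega) h2
    | succ k ih =>
      intro n h1 h2
      by_cases hge : x - k ≤ n
      · exact ih n hge h2
      · have hn : n = x - k - 1 := by omega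
        rw [newman_bwd hA ht n, newman_bwd hA ht' n]
        have hpt : ∀ a ∈ A, a ≠ Mx → ((n + Mx - a ∈ C) ↔ (n + Mx - a ∈ C')) := by
          intro a haA hne
          have h1a : m ≤ a := A.min'_le _ haA
          have h2a : a ≤ Mx := A.le_max' _ haA
          have hma : a < Mx := lt_of_le_of_ne h2a hne
          exact ih _ (by omega) (by omega)
        constructor <;> intro hex h <;> apply hex
        · obtain ⟨a, haA, hne, hc⟩ := h
          exact ⟨a, haA, hne, (hpt a haA hne).mpr hc⟩
        · obtain ⟨a, haA, hne, hc⟩ := h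
          exact ⟨a, haA, hne, (hpt a haA hne).mp hc⟩
  intro n
  rcases lt_or_ge n x with h | h
  · exact key2 (x - n).toNat n (by omega) (by omega)
  · exact key1 ((n - x).toNat + 1) n h (by push_cast; omega)

lemma newman_period {A : Finset ℤ} (hA : A.Nonempty) {C : Set ℤ} (ht : NTiles A C) :
    ∃ M : ℤ, 0 < M ∧ ∀ n : ℤ, n ∈ C ↔ n + M ∈ C := by
  classical
  set D := A.max' hA - A.min' hA with hD
  have hD0 : 0 ≤ D := by
    have : A.min' hA ≤ A.max' hA := A.min'_le _ (A.max'_mem hA)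
    omega
  set d := D.toNat with hd
  have hdD : (d : ℤ) = D := Int.toNat_of_nonneg hD0
  set s : ℤ → (Fin d → Bool) := fun z i => decide ((z + (i : ℤ)) ∈ C) with hs
  -- main step: equal states at x < y give period y - x
  have main : ∀ x y : ℤ, x < y → s x = s y → ∃ M : ℤ, 0 < M ∧ ∀ n : ℤ, n ∈ C ↔ n + M ∈ C := by
    intro x y hxy hsxy
    set M := y - x with hM
    refine ⟨M, by omega, ?_⟩
    set C' : Set ℤ := {z | z + M ∈ C} with hC'
    have ht' : NTiles A C' := by
      intro n
      obtain ⟨⟨a, c⟩, ⟨h1, h2, h3⟩, hu⟩ := ht (n + M)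
      refine ⟨(a, c - M), ⟨h1, by show c - M + M ∈ C; simpa using h2, by simp only at h3 ⊢; omega⟩, ?_⟩
      rintro ⟨a', c'⟩ ⟨h1', h2', h3'⟩
      have h4 := hu (a', c' + M) ⟨h1', h2', by simp only at h3' ⊢; omega⟩
      simp only [Prod.ext_iff] at h4 ⊢
      omega
    have hag : ∀ n, x ≤ n → n < x + D → (n ∈ C ↔ n ∈ C') := by
      intro n h1 h2
      have hi : (n - x).toNat < d := by omega
      have := congrFun hsxy ⟨(n - x).toNat, hi⟩
      simp only [hs] at this
      rw [decide_eq_decide] at this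
      rw [show (x + ((⟨(n - x).toNat, hi⟩ : Fin d) : ℤ)) = n by push_cast; omega,
        show (y + ((⟨(n - x).toNat, hi⟩ : Fin d) : ℤ)) = n + M by push_cast; omega] at this
      exact this
    intro n
    exact newman_determ hA ht ht' x hag n
  -- pigeonhole on states at 0,…,2^d
  have hcardlt : (Finset.univ : Finset (Fin d → Bool)).card < (Finset.Icc (0 : ℤ) (2 ^ d)).card := by
    rw [Int.card_Icc]
    simp only [Finset.card_univ]
    rw [show ((2:ℤ) ^ d + 1 - 0) = ((2 ^ d + 1 : ℕ) : ℤ) by push_cast; ring]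
    rw [Int.toNat_natCast]
    simp [Fintype.card_fun]
  obtain ⟨x, -, y, -, hxy, hsxy⟩ :=
    Finset.exists_ne_map_eq_of_card_lt_of_maps_to hcardlt (fun a _ => Finset.mem_univ (s a))
  rcases lt_or_gt_of_ne hxy with h | h
  · exact main x y h hsxy
  · exact main y x h hsxy.symm



/-- Newman's periodicity theorem: if a finite set `A ⊆ ℤ` tiles the integers with
translation set `C`, then the tiling is periodic: there exist `M > 0` and a finite
set `B` with `C = B + Mℤ` and `|A|·|B| = M`. -/
theorem favard_stmt4 (A : Finset ℤ) (hA : A.Nonempty) (C : Set ℤ)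
    (htile : ∀ n : ℤ, ∃! p : ℤ × ℤ, p.1 ∈ A ∧ p.2 ∈ C ∧ p.1 + p.2 = n) :
    ∃ M : ℤ, 0 < M ∧ ∃ B : Finset ℤ,
      (A.card : ℤ) * (B.card : ℤ) = M ∧
      C = {c : ℤ | ∃ b ∈ B, ∃ k : ℤ, c = b + M * k} := by
  classical
  obtain ⟨M, hM, hper⟩ := newman_period hA htile
  have hperk : ∀ n t : ℤ, n ∈ C ↔ n + M * t ∈ C := by
    intro n t
    induction t using Int.induction_on with
    | zero => simp
    | succ t ih =>
      have h2 := hper (n + M * t)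
      rw [show n + M * ((t : ℤ) + 1) = n + M * t + M by ring]
      exact ih.trans h2
    | pred t ih =>
      have h2 := hper (n + M * (-(t : ℤ) - 1))
      rw [show n + M * (-(t : ℤ) - 1) + M = n + M * (-(t : ℤ)) by ring] at h2
      exact ih.trans h2.symm
  set B : Finset ℤ := (Finset.Ico (0 : ℤ) M).filter (· ∈ C) with hBdef
  have hB : ∀ b : ℤ, b ∈ B ↔ (0 ≤ b ∧ b < M ∧ b ∈ C) := by
    intro b; simp [hBdef, Finset.mem_filter, Finset.mem_Ico, and_assoc]
  have hmodC : ∀ c : ℤ, c ∈ C → c % M ∈ C := by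
    intro c hc
    have h2 := hperk c (-(c / M))
    rw [show c + M * (-(c / M)) = c % M by rw [Int.emod_def]; ring] at h2
    exact h2.mp hc
  refine ⟨M, hM, B, ?_, ?_⟩
  · -- cardinality
    have hcard : (A ×ˢ B).card = (Finset.Ico (0 : ℤ) M).card := by
      apply Finset.card_bij (fun p _ => (p.1 + p.2) % M)
      · intro p hp
        rw [Finset.mem_Ico]
        exact ⟨Int.emod_nonneg _ hM.ne', Int.emod_lt_of_pos _ hM⟩
      · intro p hp q hq h
        rw [Finset.mem_product] at hp hq
        obtain ⟨hp1, hp2⟩ := hp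
        obtain ⟨hq1, hq2⟩ := hq
        rw [hB] at hp2 hq2
        have hmod : M ∣ (q.1 + q.2) - (p.1 + p.2) := Int.ModEq.dvd h
        obtain ⟨t, ht⟩ := hmod
        have hc' : q.2 - M * t ∈ C := by
          have h2 := hperk q.2 (-t)
          rw [show q.2 + M * (-t) = q.2 - M * t by ring] at h2
          exact h2.mp hq2.2.2
        have hu := newman_unique_pair htile hp1 hp2.2.2 rfl hq1 hc'
          (by linarith : q.1 + (q.2 - M * t) = p.1 + p.2)
        have ht0 : t = 0 := by
          rcases lt_trichotomy t 0 with h' | h' | h'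
          · have h3 : M * t ≤ M * (-1) := by
              apply mul_le_mul_of_nonneg_left (by omega : t ≤ -1) hM.le
            have := hu.2
            linarith [hp2.1, hp2.2.1, hq2.1, hq2.2.1]
          · exact h'
          · have h3 : M * 1 ≤ M * t := by
              apply mul_le_mul_of_nonneg_left (by omega : (1:ℤ) ≤ t) hM.le
            have := hu.2
            linarith [hp2.1, hp2.2.1, hq2.1, hq2.2.1]
        have h5 : p.2 = q.2 := by rw [hu.2, ht0]; ring
        exact Prod.ext hu.1 h5
      · intro n hn
        rw [Finset.mem_Ico] at hn
        obtain ⟨⟨a, c⟩, ⟨ha, hc, hsum⟩, -⟩ := htile n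
        simp only at ha hc hsum
        refine ⟨(a, c % M), Finset.mem_product.mpr ⟨ha, ?_⟩, ?_⟩
        · rw [hB]
          exact ⟨Int.emod_nonneg _ hM.ne', Int.emod_lt_of_pos _ hM, hmodC c hc⟩
        · show (a + c % M) % M = n
          have h6 : a + c % M = n + M * (-(c / M)) := by
            rw [Int.emod_def]; linarith
          rw [h6, Int.add_mul_emod_self_left, Int.emod_eq_of_lt hn.1 hn.2]
    rw [Finset.card_product] at hcard
    rw [Int.card_Ico] at hcard
    have h7 : ((A.card * B.card : ℕ) : ℤ) = M := by rw [hcard]; omega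
    push_cast at h7
    linarith
  · -- set equality
    ext c
    simp only [Set.mem_setOf_eq]
    constructor
    · intro hc
      refine ⟨c % M, ?_, c / M, by rw [Int.emod_def]; ring⟩
      rw [hB]
      exact ⟨Int.emod_nonneg _ hM.ne', Int.emod_lt_of_pos _ hM, hmodC c hc⟩
    · rintro ⟨b, hb, k, rfl⟩
      rw [hB] at hb
      exact (hperk b k).mp hb.2.2
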